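/- One-dimensional reduction of the max over a ball via the sphere maximum: for p ≠ 0, A ∈ ℝ^{d×d}, and a continuous kernel Φ : [0,∞) → [0,∞) with support in [0,2], max_{v ∈ B(0,2h)} Φ(|v|/h)(p·v + (1/2)v·Av) = max_{0 ≤ s ≤ 2} { s Φ(s)|p| h + (1/2) s² Φ(s) (|p|^{−2} p·Ap) h² } + O(h³), where the O(h³) constant depends only on ‖A‖ and |p|⁻¹. -/

import Mathlib

open scoped RealInnerProductSpace

lemma sphere_est {E : Type*} [NormedAddCommGroup E] [InnerProductSpace ℝ E]
    (p v : E) (A : E →L[ℝ] E) (hp : p ≠ 0) :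
    ⟪p, v⟫ + (1/2) * ⟪v, A v⟫ ≤
      ‖v‖ * ‖p‖ + (1/2) * ‖v‖^2 * (⟪p, A p⟫ / ‖p‖^2) + ‖v‖^3 * ‖A‖^2 / (2 * ‖p‖) := by
  rcases eq_or_ne v 0 with rfl | hv
  · simp
  have hr : 0 < ‖v‖ := norm_pos_iff.mpr hv
  have hpn : 0 < ‖p‖ := norm_pos_iff.mpr hp
  set ω := ‖v‖⁻¹ • v with hωdef
  set e := ‖p‖⁻¹ • p with hedef
  have hω : ‖ω‖ = 1 := norm_smul_inv_norm hv
  have he : ‖e‖ = 1 := norm_smul_inv_norm hp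
  have hv' : v = ‖v‖ • ω := by rw [hωdef, smul_smul, mul_inv_cancel₀ hr.ne', one_smul]
  have hp' : p = ‖p‖ • e := by rw [hedef, smul_smul, mul_inv_cancel₀ hpn.ne', one_smul]
  set u := ‖ω - e‖ with hu
  have hu0 : 0 ≤ u := norm_nonneg _
  have h1 : ⟪ω, e⟫ = 1 - u^2/2 := by
    have := norm_sub_sq_real ω e
    rw [hω, he] at this
    nlinarith [this]
  have h2 : ⟪p, v⟫ = ‖v‖ * ‖p‖ * ⟪ω, e⟫ := by
    conv_lhs => rw [hv', hp']
    rw [real_inner_smul_left, real_inner_smul_right, real_inner_comm]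
    ring
  have h3 : ⟪v, A v⟫ = ‖v‖^2 * ⟪ω, A ω⟫ := by
    conv_lhs => rw [hv']
    rw [map_smul, real_inner_smul_left, real_inner_smul_right]
    ring
  have h4 : ⟪e, A e⟫ = ⟪p, A p⟫ / ‖p‖^2 := by
    have hne : (‖p‖ : ℝ) ≠ 0 := hpn.ne'
    rw [hedef, map_smul, real_inner_smul_left, real_inner_smul_right,
      eq_div_iff (by positivity : (‖p‖:ℝ)^2 ≠ 0)]
    field_simp
  have h5 : ⟪ω, A ω⟫ ≤ ⟪e, A e⟫ + 2 * ‖A‖ * u := by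
    have key : ⟪ω, A ω⟫ - ⟪e, A e⟫ = ⟪ω - e, A ω⟫ + ⟪e, A (ω - e)⟫ := by
      rw [inner_sub_left, map_sub, inner_sub_right]
      ring
    have b1 : ⟪ω - e, A ω⟫ ≤ u * ‖A‖ := by
      calc ⟪ω - e, A ω⟫ ≤ ‖ω - e‖ * ‖A ω‖ := real_inner_le_norm _ _
        _ ≤ u * (‖A‖ * ‖ω‖) := by
            exact mul_le_mul_of_nonneg_left (A.le_opNorm ω) hu0
        _ = u * ‖A‖ := by rw [hω]; ring
    have b2 : ⟪e, A (ω - e)⟫ ≤ u * ‖A‖ := by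
      calc ⟪e, A (ω - e)⟫ ≤ ‖e‖ * ‖A (ω - e)‖ := real_inner_le_norm _ _
        _ ≤ ‖e‖ * (‖A‖ * ‖ω - e‖) := by
            exact mul_le_mul_of_nonneg_left (A.le_opNorm _) (norm_nonneg _)
        _ = u * ‖A‖ := by rw [he]; ring
    linarith
  have key : -(‖v‖ * ‖p‖ * u^2/2) + ‖v‖^2 * ‖A‖ * u ≤ ‖v‖^3 * ‖A‖^2 / (2 * ‖p‖) := by
    rw [le_div_iff₀ (by positivity)]
    nlinarith [mul_nonneg hr.le (sq_nonneg (‖p‖ * u - ‖v‖ * ‖A‖))]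
  have h5' : (1/2) * ‖v‖^2 * ⟪ω, A ω⟫ ≤ (1/2) * ‖v‖^2 * (⟪e, A e⟫ + 2 * ‖A‖ * u) :=
    mul_le_mul_of_nonneg_left h5 (by positivity)
  rw [h2, h3, h1, ← h4]
  nlinarith [h5', key]

/-- One-dimensional reduction of the max over a ball via the sphere maximum: for `p ≠ 0`,
a matrix `A`, and a continuous nonnegative kernel `Φ` supported in `[0,2]`,
`max_{v∈B(0,2h)} Φ(|v|/h)(p·v + (1/2)v·Av)` equals
`max_{0≤s≤2} { sΦ(s)|p|h + (1/2)s²Φ(s)(|p|⁻²p·Ap)h² }` up to `O(h³)`, with constant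
depending only on `‖A‖` and `|p|⁻¹`. -/
theorem ball_max_one_dimensional_reduction (d : ℕ) (Φ : ℝ → ℝ)
    (hΦc : Continuous Φ) (hΦ0 : ∀ s, 0 ≤ Φ s) (hΦsupp : ∀ s, 2 ≤ s → Φ s = 0)
    (Ka Kp : ℝ) :
    ∃ C : ℝ, ∀ (p : EuclideanSpace ℝ (Fin d))
      (A : EuclideanSpace ℝ (Fin d) →L[ℝ] EuclideanSpace ℝ (Fin d)),
      p ≠ 0 → ‖A‖ ≤ Ka → ‖p‖⁻¹ ≤ Kp → ∀ h : ℝ, 0 < h →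
      |sSup ((fun v : EuclideanSpace ℝ (Fin d) =>
          Φ (‖v‖ / h) * (⟪p, v⟫ + (1 / 2) * ⟪v, A v⟫)) ''
            Metric.closedBall 0 (2 * h)) -
        sSup ((fun s : ℝ =>
          s * Φ s * ‖p‖ * h + (1 / 2) * s ^ 2 * Φ s * (⟪p, A p⟫ / ‖p‖ ^ 2) * h ^ 2) ''
            Set.Icc 0 2)| ≤ C * h ^ 3 := by
  obtain ⟨M, hM⟩ := (isCompact_Icc (a := (0:ℝ)) (b := 2)).bddAbove_image hΦc.continuousOn
  have hMb : ∀ s ∈ Set.Icc (0:ℝ) 2, Φ s ≤ M := fun s hs => hM ⟨s, hs, rfl⟩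
  have hM0 : 0 ≤ M := le_trans (hΦ0 0) (hMb 0 ⟨le_refl _, by norm_num⟩)
  refine ⟨4 * M * Ka^2 * Kp, ?_⟩
  intro p A hp hA hKp h hh
  have hpn : 0 < ‖p‖ := norm_pos_iff.mpr hp
  have hpne : (‖p‖ : ℝ) ≠ 0 := hpn.ne'
  have hKp0 : 0 < Kp := lt_of_lt_of_le (by positivity) hKp
  have hKa0 : 0 ≤ Ka := le_trans (norm_nonneg A) hA
  set f : EuclideanSpace ℝ (Fin d) → ℝ := fun v =>
    Φ (‖v‖ / h) * (⟪p, v⟫ + (1 / 2) * ⟪v, A v⟫) with hf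
  set g : ℝ → ℝ := fun s =>
    s * Φ s * ‖p‖ * h + (1 / 2) * s ^ 2 * Φ s * (⟪p, A p⟫ / ‖p‖ ^ 2) * h ^ 2 with hg
  have hfc : Continuous f := by
    apply Continuous.mul
    · exact hΦc.comp (continuous_norm.div_const h)
    · exact (continuous_const.inner continuous_id).add
        (continuous_const.mul (continuous_id.inner A.continuous))
  have hgc : Continuous g := by
    apply Continuous.add
    · exact ((continuous_id.mul hΦc).mul continuous_const).mul continuous_const
    · exact (((continuous_const.mul (continuous_pow 2)).mul hΦc).mul
        continuous_const).mul continuous_const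
  have hS1ne : (f '' Metric.closedBall 0 (2 * h)).Nonempty :=
    ⟨f 0, ⟨0, Metric.mem_closedBall_self (by positivity), rfl⟩⟩
  have hS1bdd : BddAbove (f '' Metric.closedBall 0 (2 * h)) :=
    (isCompact_closedBall 0 (2 * h)).bddAbove_image hfc.continuousOn
  have hS2ne : (g '' Set.Icc (0:ℝ) 2).Nonempty := ⟨g 0, ⟨0, ⟨le_refl _, by norm_num⟩, rfl⟩⟩
  have hS2bdd : BddAbove (g '' Set.Icc (0:ℝ) 2) :=
    isCompact_Icc.bddAbove_image hgc.continuousOn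
  have low : sSup (g '' Set.Icc (0:ℝ) 2) ≤ sSup (f '' Metric.closedBall 0 (2 * h)) := by
    apply csSup_le hS2ne
    rintro x ⟨s, hs, rfl⟩
    apply le_csSup hS1bdd
    have hsh0 : 0 ≤ s * h := mul_nonneg hs.1 hh.le
    have hnw : ‖(s * h) • (‖p‖⁻¹ • p)‖ = s * h := by
      rw [norm_smul, norm_smul, norm_inv, norm_norm, inv_mul_cancel₀ hpne, mul_one,
        Real.norm_eq_abs, abs_of_nonneg hsh0]
    refine ⟨(s * h) • (‖p‖⁻¹ • p), ?_, ?_⟩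
    · rw [Metric.mem_closedBall, dist_zero_right, hnw]
      nlinarith [hs.2]
    · have hi1 : ⟪p, (s * h) • (‖p‖⁻¹ • p)⟫ = s * h * ‖p‖ := by
        rw [real_inner_smul_right, real_inner_smul_right, real_inner_self_eq_norm_sq]
        field_simp
      have hi2 : ⟪(s * h) • (‖p‖⁻¹ • p), A ((s * h) • (‖p‖⁻¹ • p))⟫
          = (s * h)^2 * ‖p‖⁻¹^2 * ⟪p, A p⟫ := by
        rw [map_smul, map_smul, real_inner_smul_left, real_inner_smul_left,
          real_inner_smul_right, real_inner_smul_right]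
        ring
      simp only [hf, hg]
      rw [hnw, mul_div_assoc, div_self hh.ne', mul_one, hi1, hi2]
      field_simp
  have up : sSup (f '' Metric.closedBall 0 (2 * h)) ≤
      sSup (g '' Set.Icc (0:ℝ) 2) + (4 * M * Ka^2 * Kp) * h ^ 3 := by
    apply csSup_le hS1ne
    rintro x ⟨v, hv, rfl⟩
    have hvn : ‖v‖ ≤ 2 * h := by rwa [Metric.mem_closedBall, dist_zero_right] at hv
    set s := ‖v‖ / h with hs
    have hs0 : 0 ≤ s := div_nonneg (norm_nonneg v) hh.le
    have hs2 : s ≤ 2 := by rw [hs, div_le_iff₀ hh]; linarith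
    have hsh : s * h = ‖v‖ := div_mul_cancel₀ _ hh.ne'
    have step1 : f v ≤ Φ s * (‖v‖ * ‖p‖ + (1/2) * ‖v‖^2 * (⟪p, A p⟫ / ‖p‖^2)
        + ‖v‖^3 * ‖A‖^2 / (2 * ‖p‖)) :=
      mul_le_mul_of_nonneg_left (sphere_est p v A hp) (hΦ0 s)
    have step2 : Φ s * (‖v‖ * ‖p‖ + (1/2) * ‖v‖^2 * (⟪p, A p⟫ / ‖p‖^2)
        + ‖v‖^3 * ‖A‖^2 / (2 * ‖p‖))
        = g s + Φ s * (‖v‖^3 * ‖A‖^2 / (2 * ‖p‖)) := by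
      simp only [hg]
      rw [← hsh]
      ring
    have step3 : Φ s * (‖v‖^3 * ‖A‖^2 / (2 * ‖p‖)) ≤ 4 * M * Ka^2 * Kp * h ^ 3 := by
      calc Φ s * (‖v‖^3 * ‖A‖^2 / (2 * ‖p‖))
          = Φ s * ‖v‖^3 * ‖A‖^2 * ‖p‖⁻¹ / 2 := by
            rw [div_eq_mul_inv, mul_inv]
            ring
        _ ≤ M * (2 * h)^3 * Ka^2 * Kp / 2 := by
            gcongr <;> first
              | exact hMb s ⟨hs0, hs2⟩ | exact hvn | exact hA | exact hKp | positivity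
        _ = 4 * M * Ka^2 * Kp * h ^ 3 := by ring
    have hgS : g s ≤ sSup (g '' Set.Icc (0:ℝ) 2) := le_csSup hS2bdd ⟨s, ⟨hs0, hs2⟩, rfl⟩
    have := step1
    rw [step2] at this
    exact this.trans (add_le_add hgS step3)
  have hC0 : 0 ≤ 4 * M * Ka^2 * Kp * h ^ 3 := by positivity
  rw [abs_le]
  constructor <;> linarith
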